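/- Let Λ : ℝ → ℝ be a continuously differentiable function such that Λ(s) → -∞ as s → -∞, Λ(s) → +∞ as s → +∞, and Λ'(s) > 0 whenever Λ(s) = 0 or Λ(s) = -1. Then there exist unique s₁ < s₂ such that Λ(s₁) = -1 and Λ(s₂) = 0; moreover Λ(s) < -1 for s < s₁, -1 < Λ(s) < 0 for s₁ < s < s₂, and Λ(s) > 0 for s > s₂. -/

import Mathlib

open Filter Set

private lemma stmt4_key (Λ : ℝ → ℝ) (hΛ : ContDiff ℝ 1 Λ) (c : ℝ)
    (hcrit : ∀ s, Λ s = c → 0 < deriv Λ s)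
    {a b : ℝ} (hab : a < b) (ha : c ≤ Λ a) (hb : Λ b = c) : False := by
  have hcont : Continuous Λ := hΛ.continuous
  have hdiff : Differentiable ℝ Λ := hΛ.differentiable one_ne_zero
  have slope_pos : ∀ x, Λ x = c → ∀ᶠ y in nhdsWithin x {x}ᶜ, 0 < slope Λ x y := by
    intro x hx
    have h := hasDerivAt_iff_tendsto_slope.mp (hdiff x).hasDerivAt
    exact h.eventually (eventually_gt_nhds (hcrit x hx))
  -- find b' in (a, b) with Λ b' < c
  obtain ⟨b', hab', hb'b, hΛb'⟩ : ∃ b', a < b' ∧ b' < b ∧ Λ b' < c := by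
    have h1 : ∀ᶠ y in nhdsWithin b (Set.Iio b), 0 < slope Λ b y :=
      (slope_pos b hb).filter_mono (nhdsWithin_mono _ (fun y hy => ne_of_lt hy))
    have h2 : ∀ᶠ y in nhdsWithin b (Set.Iio b), a < y :=
      eventually_nhdsWithin_of_eventually_nhds (eventually_gt_nhds hab)
    obtain ⟨y, hy1, hy2, hy3⟩ := (h1.and (h2.and self_mem_nhdsWithin)).exists
    refine ⟨y, hy2, hy3, ?_⟩
    rw [slope_def_field] at hy1
    rcases div_pos_iff.mp hy1 with ⟨h3, h4⟩ | ⟨h3, h4⟩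
    · exfalso; have : y - b < 0 := sub_neg.mpr hy3; linarith
    · rw [hb] at h3; linarith
  set A : Set ℝ := Set.Icc a b' ∩ Λ ⁻¹' {c} with hA
  have hAne : A.Nonempty := by
    have : c ∈ Set.Icc (Λ b') (Λ a) := ⟨le_of_lt hΛb', ha⟩
    obtain ⟨t, ht, hΛt⟩ := intermediate_value_Icc' (le_of_lt hab') hcont.continuousOn this
    exact ⟨t, ht, hΛt⟩
  have hAclosed : IsClosed A := isClosed_Icc.inter (isClosed_singleton.preimage hcont)
  have hAbdd : BddAbove A := ⟨b', fun t ht => ht.1.2⟩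
  set T := sSup A with hT
  have hTA : T ∈ A := hAclosed.csSup_mem hAne hAbdd
  have hΛT : Λ T = c := hTA.2
  have hTb' : T < b' := lt_of_le_of_ne hTA.1.2 (fun h => by rw [h] at hΛT; linarith)
  -- find u in (T, b') with Λ u > c
  obtain ⟨u, hTu, hub', hΛu⟩ : ∃ u, T < u ∧ u < b' ∧ c < Λ u := by
    have h1 : ∀ᶠ y in nhdsWithin T (Set.Ioi T), 0 < slope Λ T y :=
      (slope_pos T hΛT).filter_mono (nhdsWithin_mono _ (fun y hy => (ne_of_gt hy)))
    have h2 : ∀ᶠ y in nhdsWithin T (Set.Ioi T), y < b' :=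
      eventually_nhdsWithin_of_eventually_nhds (eventually_lt_nhds hTb')
    obtain ⟨y, hy1, hy2, hy3⟩ := (h1.and (h2.and self_mem_nhdsWithin)).exists
    refine ⟨y, hy3, hy2, ?_⟩
    rw [slope_def_field] at hy1
    rcases div_pos_iff.mp hy1 with ⟨h3, h4⟩ | ⟨h3, h4⟩
    · rw [hΛT] at h3; linarith
    · exfalso; have : (0:ℝ) < y - T := sub_pos.mpr hy3; linarith
  -- IVT on [u, b'] gives v with Λ v = c, contradicting sSup
  have : c ∈ Set.Icc (Λ b') (Λ u) := ⟨le_of_lt hΛb', le_of_lt hΛu⟩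
  obtain ⟨v, hv, hΛv⟩ := intermediate_value_Icc' (le_of_lt hub') hcont.continuousOn this
  have hvA : v ∈ A := ⟨⟨le_trans hTA.1.1 (le_trans (le_of_lt hTu) hv.1), hv.2⟩, hΛv⟩
  have : v ≤ T := le_csSup hAbdd hvA
  linarith [lt_of_lt_of_le hTu hv.1]

private lemma stmt4_level (Λ : ℝ → ℝ) (hΛ : ContDiff ℝ 1 Λ)
    (hbot : Tendsto Λ atBot atBot) (htop : Tendsto Λ atTop atTop) (c : ℝ)
    (hcrit : ∀ s, Λ s = c → 0 < deriv Λ s) :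
    ∃ s₀, Λ s₀ = c ∧ (∀ s, s < s₀ → Λ s < c) ∧ (∀ s, s₀ < s → c < Λ s) := by
  have hcont : Continuous Λ := hΛ.continuous
  obtain ⟨N, hN⟩ := eventually_atBot.mp (hbot.eventually (eventually_lt_atBot c))
  obtain ⟨M, hM⟩ := eventually_atTop.mp (htop.eventually (eventually_gt_atTop c))
  set a := min N M - 1 with hadef
  have hΛa : Λ a < c := hN a (by linarith [min_le_left N M, hadef])
  set b := max M (a + 1) with hbdef
  have hΛb : c < Λ b := hM b (le_max_left _ _)
  have hab : a < b := lt_of_lt_of_le (by linarith) (le_max_right _ _)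
  obtain ⟨s₀, hs₀mem, hΛs₀⟩ := intermediate_value_Icc (le_of_lt hab) hcont.continuousOn
    (⟨le_of_lt hΛa, le_of_lt hΛb⟩ : c ∈ Set.Icc (Λ a) (Λ b))
  refine ⟨s₀, hΛs₀, ?_, ?_⟩
  · intro s hs
    by_contra h
    exact stmt4_key Λ hΛ c hcrit hs (not_lt.mp h) hΛs₀
  · intro s hs
    by_contra h
    push_neg at h
    set b'' := max M (s + 1) with hb''
    have hsb'' : s < b'' := lt_of_lt_of_le (by linarith) (le_max_right _ _)
    have hΛb'' : c < Λ b'' := hM b'' (le_max_left _ _)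
    obtain ⟨t, htmem, hΛt⟩ := intermediate_value_Icc (le_of_lt hsb'') hcont.continuousOn
      (⟨h, le_of_lt hΛb''⟩ : c ∈ Set.Icc (Λ s) (Λ b''))
    exact stmt4_key Λ hΛ c hcrit (lt_of_lt_of_le hs htmem.1) (le_of_eq hΛs₀.symm) hΛt

/-- Abstract bifurcation lemma: a `C¹` function `Λ` tending to `-∞`
at `-∞` and to `+∞` at `+∞`, with positive derivative at every point where it
takes the value `0` or `-1`, takes each of these values exactly once; moreover
`Λ < -1` before the first point, `-1 < Λ < 0` between them, `Λ > 0` after. -/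
theorem stmt4 (Λ : ℝ → ℝ) (hΛ : ContDiff ℝ 1 Λ)
    (hbot : Filter.Tendsto Λ Filter.atBot Filter.atBot)
    (htop : Filter.Tendsto Λ Filter.atTop Filter.atTop)
    (hcrit : ∀ s, (Λ s = 0 ∨ Λ s = -1) → 0 < deriv Λ s) :
    ∃ s₁ s₂ : ℝ, s₁ < s₂ ∧ Λ s₁ = -1 ∧ Λ s₂ = 0 ∧
      (∀ s, Λ s = -1 → s = s₁) ∧ (∀ s, Λ s = 0 → s = s₂) ∧
      (∀ s, s < s₁ → Λ s < -1) ∧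
      (∀ s, s₁ < s → s < s₂ → -1 < Λ s ∧ Λ s < 0) ∧
      (∀ s, s₂ < s → 0 < Λ s) := by
  obtain ⟨s₁, hΛ1, hlt1, hgt1⟩ :=
    stmt4_level Λ hΛ hbot htop (-1) (fun s hs => hcrit s (Or.inr hs))
  obtain ⟨s₂, hΛ2, hlt2, hgt2⟩ :=
    stmt4_level Λ hΛ hbot htop 0 (fun s hs => hcrit s (Or.inl hs))
  have h12 : s₁ < s₂ := by
    rcases lt_trichotomy s₁ s₂ with h | h | h
    · exact h
    · rw [h, hΛ2] at hΛ1; norm_num at hΛ1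
    · have := hgt2 s₁ h; rw [hΛ1] at this; norm_num at this
  refine ⟨s₁, s₂, h12, hΛ1, hΛ2, ?_, ?_, fun s hs => hlt1 s hs, ?_, fun s hs => hgt2 s hs⟩
  · intro s hs
    rcases lt_trichotomy s s₁ with h | h | h
    · exact absurd hs (ne_of_lt (hlt1 s h))
    · exact h
    · exact absurd hs (ne_of_gt (hgt1 s h))
  · intro s hs
    rcases lt_trichotomy s s₂ with h | h | h
    · exact absurd hs (ne_of_lt (hlt2 s h))
    · exact h
    · exact absurd hs (ne_of_gt (hgt2 s h))
  · exact fun s h1 h2 => ⟨hgt1 s h1, hlt2 s h2⟩
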